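/- With the notation of the previous items, the following integration-by-parts identity holds: A_{2k}^{(d)} = (Z_d/(d-1))·G_{2k}^{(d)}(0) + (2k(2k+d-2)/(d-1)²)·(Z_d/Z_{d+2})·B_{2k-1}^{(d+2)}, using the derivative formula (d/dx)G_k^{(d)}(x) = (k(k+d-2)/(d-1))·G_{k-1}^{(d+2)}(x). -/

import Mathlib

open scoped Nat
open MeasureTheory

noncomputable def geg (d : ℕ) : ℕ → ℝ → ℝ
  | 0, _ => 1
  | 1, x => x
  | (k + 2), x =>
      (((d : ℝ) + 2 * (k + 2) - 4) / ((d : ℝ) + (k + 2) - 3)) * x * geg d (k + 1) x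
        - (((k : ℝ) + 1) / ((d : ℝ) + (k + 2) - 3)) * geg d k x

noncomputable def Zc (d : ℕ) : ℝ :=
  Real.Gamma ((d : ℝ) / 2) / (Real.sqrt Real.pi * Real.Gamma (((d : ℝ) - 1) / 2))

noncomputable def Ageg (d k : ℕ) : ℝ :=
  ∫ x in (0:ℝ)..1, x * geg d (2 * k) x * (Zc d * (1 - x ^ 2) ^ (((d : ℝ) - 3) / 2))

noncomputable def Bgeg (d k : ℕ) : ℝ :=
  ∫ x in (0:ℝ)..1, geg d (2 * k + 1) x * (Zc d * (1 - x ^ 2) ^ (((d : ℝ) - 3) / 2))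

lemma geg_rec (d : ℕ) (hd : 2 ≤ d) (k : ℕ) (x : ℝ) :
    ((d : ℝ) + k - 1) * geg d (k + 2) x
      = ((d : ℝ) + 2 * k) * x * geg d (k + 1) x - ((k : ℝ) + 1) * geg d k x := by
  have hne : (d : ℝ) + (k + 2 : ℕ) - 3 ≠ 0 := by
    have : (2:ℝ) ≤ (d:ℝ) := by exact_mod_cast hd
    push_cast
    nlinarith [Nat.cast_nonneg (α := ℝ) k]
  rw [show geg d (k + 2) x =
      (((d : ℝ) + 2 * (k + 2) - 4) / ((d : ℝ) + (k + 2) - 3)) * x * geg d (k + 1) x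
        - (((k : ℝ) + 1) / ((d : ℝ) + (k + 2) - 3)) * geg d k x from rfl]
  push_cast at hne ⊢
  field_simp
  ring

lemma gegQ (d : ℕ) (hd : 2 ≤ d) (n : ℕ) (x : ℝ) :
    ((d:ℝ) - 1) * (2 * n + (d:ℝ) - 2) * geg d n x
      = ((n:ℝ) + (d:ℝ) - 1) * ((n:ℝ) + (d:ℝ) - 2) * geg (d+2) n x
        - (n:ℝ) * ((n:ℝ) - 1) * geg (d+2) (n-2) x := by
  have hd' : (2:ℝ) ≤ (d:ℝ) := by exact_mod_cast hd
  have h1 : ((d:ℝ) - 1) ≠ 0 := by nlinarith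
  have h2 : ((d:ℝ) + 1) ≠ 0 := by nlinarith
  have h3 : ((d:ℝ)) ≠ 0 := by nlinarith
  have h4 : ((d:ℝ) + 2) ≠ 0 := by nlinarith
  induction n using Nat.strong_induction_on with
  | _ n ih =>
  match n with
  | 0 => simp only [geg]; push_cast; ring
  | 1 => simp only [geg]; push_cast; ring
  | 2 =>
      have R1 := geg_rec d hd 0 x
      have R2 := geg_rec (d+2) (by omega) 0 x
      rw [show (0:ℕ)+2 = 2 from rfl, show (0:ℕ)+1 = 1 from rfl] at R1 R2
      rw [show (2:ℕ)-2 = 0 from rfl]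
      simp only [show geg d 1 x = x from rfl, show geg d 0 x = 1 from rfl,
        show geg (d+2) 1 x = x from rfl, show geg (d+2) 0 x = 1 from rfl] at R1 R2 ⊢
      push_cast at R1 R2 ⊢
      linear_combination ((d:ℝ)+2) * R1 - (d:ℝ) * R2
  | 3 =>
      have R1g := geg_rec d hd 1 x
      have R2h := geg_rec (d+2) (by omega) 1 x
      have R0g := geg_rec d hd 0 x
      have R0h := geg_rec (d+2) (by omega) 0 x
      rw [show (1:ℕ)+2 = 3 from rfl, show (1:ℕ)+1 = 2 from rfl] at R1g R2h
      rw [show (0:ℕ)+2 = 2 from rfl, show (0:ℕ)+1 = 1 from rfl] at R0g R0h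
      rw [show (3:ℕ)-2 = 1 from rfl]
      simp only [show geg d 1 x = x from rfl, show geg d 0 x = 1 from rfl,
        show geg (d+2) 1 x = x from rfl, show geg (d+2) 0 x = 1 from rfl] at R1g R2h R0g R0h ⊢
      have hS : (d:ℝ) * ((d:ℝ)+1) * ((d:ℝ)-1) ≠ 0 := by
        apply mul_ne_zero (mul_ne_zero h3 h2) h1
      apply mul_left_cancel₀ hS
      push_cast at R1g R2h R0g R0h ⊢
      linear_combination
        (((d:ℝ)+1)*((d:ℝ)-1)^2*((d:ℝ)+4)) * R1g
        - ((d:ℝ)*((d:ℝ)+1)^2*((d:ℝ)-1)) * R2h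
        + (((d:ℝ)+1)*((d:ℝ)-1)*((d:ℝ)+4)*((d:ℝ)+2)*x) * R0g
        - ((d:ℝ)*((d:ℝ)+1)*((d:ℝ)-1)*((d:ℝ)+4)*x) * R0h
  | (m+4) =>
      have E1 := ih (m+3) (by omega)
      have E2 := ih (m+2) (by omega)
      rw [show m+3-2 = m+1 from rfl] at E1
      rw [show m+2-2 = m from rfl] at E2
      have R1 := geg_rec d hd (m+2) x
      have R2 := geg_rec (d+2) (by omega) (m+2) x
      have R3 := geg_rec (d+2) (by omega) m x
      rw [show m+2+2 = m+4 from rfl, show m+2+1 = m+3 from rfl] at R1 R2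
      rw [show m+4-2 = m+2 from rfl]
      have h0 : (0:ℝ) ≤ (m:ℝ) := Nat.cast_nonneg m
      have hne : ((d:ℝ) + (m:ℝ) + 1) * ((d:ℝ) + 2*(m:ℝ) + 2) ≠ 0 := by positivity
      apply mul_left_cancel₀ hne
      push_cast at E1 E2 R1 R2 R3 ⊢
      linear_combination
        (((d:ℝ)+2*m+6)*((d:ℝ)+2*m+2)*x) * E1
        - (((d:ℝ)+2*m+6)*((m:ℝ)+3)) * E2
        + (((d:ℝ)-1)*((d:ℝ)+2*m+6)*((d:ℝ)+2*m+2)) * R1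
        - (((m:ℝ)+(d:ℝ)+2)*((d:ℝ)+(m:ℝ)+1)*((d:ℝ)+2*m+2)) * R2
        + (((d:ℝ)+2*m+6)*((m:ℝ)+3)*((m:ℝ)+2)) * R3


lemma gegD' (d : ℕ) (hd : 2 ≤ d) (n : ℕ) (x : ℝ) :
    HasDerivAt (fun y => ((d:ℝ) - 1) * geg d n y)
      ((n:ℝ) * ((n:ℝ) + (d:ℝ) - 2) * geg (d+2) (n-1) x) x := by
  have hd' : (2:ℝ) ≤ (d:ℝ) := by exact_mod_cast hd
  have h1 : ((d:ℝ) - 1) ≠ 0 := by nlinarith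
  induction n using Nat.strong_induction_on with
  | _ n ih =>
  match n with
  | 0 =>
      have : (fun y => ((d:ℝ) - 1) * geg d 0 y) = fun _ => ((d:ℝ) - 1) := by
        funext y; rw [show geg d 0 y = 1 from rfl]; ring
      rw [this]
      refine (hasDerivAt_const x ((d:ℝ)-1)).congr_deriv ?_
      norm_num
  | 1 =>
      have : (fun y => ((d:ℝ) - 1) * geg d 1 y) = fun y => ((d:ℝ) - 1) * y := by
        funext y; rw [show geg d 1 y = y from rfl]
      rw [this, show (1:ℕ) - 1 = 0 from rfl, show geg (d+2) 0 x = 1 from rfl]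
      refine ((hasDerivAt_id x).const_mul ((d:ℝ)-1)).congr_deriv ?_
      push_cast; ring
  | 2 =>
      have hfun : (fun y => ((d:ℝ) - 1) * geg d 2 y) = fun y => (d:ℝ) * y ^ 2 - 1 := by
        funext y
        have R := geg_rec d hd 0 y
        rw [show (0:ℕ)+2 = 2 from rfl, show (0:ℕ)+1 = 1 from rfl,
          show geg d 1 y = y from rfl, show geg d 0 y = 1 from rfl] at R
        push_cast at R
        linear_combination R
      rw [hfun, show (2:ℕ) - 1 = 1 from rfl, show geg (d+2) 1 x = x from rfl]
      refine (((hasDerivAt_pow 2 x).const_mul (d:ℝ)).sub_const 1).congr_deriv ?_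
      push_cast; ring
  | (m+3) =>
      have hcm : (d:ℝ) + (m:ℝ) ≠ 0 := by positivity
      have hfun : (fun y => ((d:ℝ) - 1) * geg d (m+3) y)
          = fun y => (((d:ℝ) + 2*(m:ℝ) + 2) * (y * (((d:ℝ)-1) * geg d (m+2) y))
              - ((m:ℝ) + 2) * (((d:ℝ)-1) * geg d (m+1) y)) / ((d:ℝ) + (m:ℝ)) := by
        funext y
        have R := geg_rec d hd (m+1) y
        rw [show m+1+2 = m+3 from rfl, show m+1+1 = m+2 from rfl] at R
        push_cast at R
        rw [eq_div_iff hcm]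
        linear_combination ((d:ℝ)-1) * R
      rw [hfun, show m+3-1 = m+2 from rfl]
      have h2 := ih (m+2) (by omega)
      have h1d := ih (m+1) (by omega)
      rw [show m+2-1 = m+1 from rfl] at h2
      rw [show m+1-1 = m from rfl] at h1d
      have hder := ((((hasDerivAt_id x).mul h2).const_mul ((d:ℝ) + 2*(m:ℝ) + 2)).sub
          (h1d.const_mul ((m:ℝ) + 2))).div_const ((d:ℝ) + (m:ℝ))
      refine hder.congr_deriv ?_
      rw [div_eq_iff hcm]
      have E := gegQ d hd (m+2) x
      rw [show m+2-2 = m from rfl] at E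
      have R := geg_rec (d+2) (by omega) m x
      rw [show m+2 = m+2 from rfl] at R
      simp only [id_eq] at *
      push_cast at E R ⊢
      linear_combination E - ((m:ℝ)+2) * ((m:ℝ)+(d:ℝ)) * R


lemma gegD (d : ℕ) (hd : 2 ≤ d) (n : ℕ) (x : ℝ) :
    HasDerivAt (fun y => geg d n y)
      ((n:ℝ) * ((n:ℝ) + (d:ℝ) - 2) / ((d:ℝ) - 1) * geg (d+2) (n-1) x) x := by
  have hd' : (2:ℝ) ≤ (d:ℝ) := by exact_mod_cast hd
  have h1 : ((d:ℝ) - 1) ≠ 0 := by nlinarith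
  have h := (gegD' d hd n x).const_mul (((d:ℝ)-1)⁻¹)
  have heq : (fun y => (((d:ℝ)-1)⁻¹ * (((d:ℝ)-1) * geg d n y))) = fun y => geg d n y := by
    funext y
    field_simp
  rw [heq] at h
  refine h.congr_deriv ?_
  field_simp

lemma weight_integrable (q : ℝ) (hq : -1 < q) (f : ℝ → ℝ) (hf : Continuous f) :
    IntervalIntegrable (fun x => f x * (1 - x^2) ^ q) volume 0 1 := by
  obtain ⟨C, hC⟩ := (isCompact_Icc (a := (0:ℝ)) (b := 1)).exists_bound_of_continuousOn
    hf.continuousOn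
  set K : ℝ := (|C| + 1) * ((2:ℝ) ^ q + 1) with hK
  have hKpos : 0 < K := by positivity
  have hIoc : Set.uIoc (0:ℝ) 1 = Set.Ioc 0 1 := Set.uIoc_of_le (by norm_num)
  have hdom : IntervalIntegrable (fun x => K * (1 - x) ^ q) volume 0 1 := by
    apply IntervalIntegrable.const_mul
    have h0 : IntervalIntegrable (fun x : ℝ => x ^ q) volume 0 1 :=
      intervalIntegral.intervalIntegrable_rpow' hq
    have h1 := (h0.comp_sub_left 1).symm
    norm_num at h1
    exact h1
  apply hdom.mono_fun
  · rw [hIoc, ← Measure.restrict_congr_set Ioo_ae_eq_Ioc]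
    apply ContinuousOn.aestronglyMeasurable _ measurableSet_Ioo
    intro x hx
    refine (hf.continuousAt.continuousWithinAt).mul ?_
    apply ContinuousAt.continuousWithinAt
    have hpos : (0:ℝ) < 1 - x^2 := by nlinarith [hx.1, hx.2]
    exact ContinuousAt.rpow_const (by fun_prop) (Or.inl (by positivity))
  · rw [hIoc]
    filter_upwards [ae_restrict_mem measurableSet_Ioc] with x hx
    have hx0 : 0 < x := hx.1
    have hx1 : x ≤ 1 := hx.2
    have h1x : (0:ℝ) ≤ 1 - x := by linarith
    have h1px : (0:ℝ) ≤ 1 + x := by linarith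
    have hsplit : (1 - x^2 : ℝ) ^ q = (1 - x) ^ q * (1 + x) ^ q := by
      rw [← Real.mul_rpow h1x h1px]; ring_nf
    have hb2 : (1 + x) ^ q ≤ (2:ℝ) ^ q + 1 := by
      rcases le_or_gt 0 q with hq0 | hq0
      · have : (1 + x) ^ q ≤ (2:ℝ) ^ q :=
          Real.rpow_le_rpow h1px (by linarith) hq0
        linarith
      · have : (1 + x) ^ q ≤ 1 :=
          Real.rpow_le_one_of_one_le_of_nonpos (by linarith) hq0.le
        have h2q : (0:ℝ) < (2:ℝ) ^ q := by positivity
        linarith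
    have hfC : |f x| ≤ |C| + 1 := by
      have := hC x (Set.mem_Icc.mpr ⟨hx0.le, hx1⟩)
      rw [Real.norm_eq_abs] at this
      have : |f x| ≤ C := this
      have hCabs : C ≤ |C| := le_abs_self C
      linarith
    have hw1 : (0:ℝ) ≤ (1 - x) ^ q := Real.rpow_nonneg h1x q
    have hw2 : (0:ℝ) ≤ (1 + x) ^ q := Real.rpow_nonneg h1px q
    rw [Real.norm_eq_abs, Real.norm_eq_abs, abs_mul, hsplit,
      abs_of_nonneg (by positivity : (0:ℝ) ≤ (1-x)^q * (1+x)^q)]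
    have habsK : |K * (1 - x) ^ q| = K * (1-x)^q := abs_of_nonneg (by positivity)
    rw [habsK, hK]
    calc |f x| * ((1 - x) ^ q * (1 + x) ^ q)
        ≤ (|C| + 1) * ((1 - x) ^ q * ((2:ℝ)^q + 1)) := by
          apply mul_le_mul hfC _ (by positivity) (by positivity)
          exact mul_le_mul_of_nonneg_left hb2 hw1
      _ = (|C| + 1) * ((2:ℝ) ^ q + 1) * (1 - x) ^ q := by ring


lemma geg_continuous (d : ℕ) (hd : 2 ≤ d) (n : ℕ) : Continuous (fun y => geg d n y) :=
  continuous_iff_continuousAt.mpr fun x => (gegD d hd n x).continuousAt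

lemma Zc_pos (d : ℕ) (hd : 2 ≤ d) : 0 < Zc d := by
  have h1 : (0:ℝ) < (d:ℝ) := by
    have : (2:ℝ) ≤ (d:ℝ) := by exact_mod_cast hd
    linarith
  apply div_pos (Real.Gamma_pos_of_pos (by linarith))
  exact mul_pos (Real.sqrt_pos.mpr Real.pi_pos)
    (Real.Gamma_pos_of_pos (by
      have : (2:ℝ) ≤ (d:ℝ) := by exact_mod_cast hd
      linarith))

/-- the integration-by-parts identity
`A_{2k}^{(d)} = (Z_d/(d-1))·G_{2k}^{(d)}(0) + (2k(2k+d-2)/(d-1)²)·(Z_d/Z_{d+2})·B_{2k-1}^{(d+2)}`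
for `k ≥ 1` (here `B_{2k-1}^{(d+2)} = Bgeg (d+2) (k-1)` since `2k-1 = 2(k-1)+1`). -/
theorem stmt13 (d : ℕ) (hd : 2 ≤ d) (k : ℕ) (hk : 1 ≤ k) :
    Ageg d k
      = Zc d / ((d : ℝ) - 1) * geg d (2 * k) 0
        + (2 * k * (2 * k + (d : ℝ) - 2) / ((d : ℝ) - 1) ^ 2) * (Zc d / Zc (d + 2))
            * Bgeg (d + 2) (k - 1) := by
  have hd' : (2:ℝ) ≤ (d:ℝ) := by exact_mod_cast hd
  have h1 : ((d:ℝ) - 1) ≠ 0 := by nlinarith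
  have hq : (-1:ℝ) < ((d:ℝ) - 3) / 2 := by linarith
  have hp0 : (0:ℝ) ≤ ((d:ℝ) - 1) / 2 := by linarith
  have hpne : ((d:ℝ) - 1) / 2 ≠ 0 := by intro h; apply h1; linarith [h]
  -- continuity facts
  have hg : Continuous (fun y => geg d (2*k) y) := geg_continuous d hd (2*k)
  have hG : Continuous (fun y => geg (d+2) (2*k-1) y) := geg_continuous (d+2) (by omega) (2*k-1)
  have hwp : Continuous (fun y : ℝ => (1 - y^2) ^ (((d:ℝ)-1)/2)) := by
    apply (Real.continuous_rpow_const hp0).comp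
    continuity
  -- the antiderivative
  set F : ℝ → ℝ := fun y => geg d (2*k) y * (-((1 - y^2) ^ (((d:ℝ)-1)/2)) / ((d:ℝ)-1)) with hF
  set f' : ℝ → ℝ := fun y =>
      y * geg d (2*k) y * (1 - y^2) ^ (((d:ℝ)-3)/2)
        + ((2*(k:ℝ)) * (2*(k:ℝ) + (d:ℝ) - 2) / ((d:ℝ) - 1)) * geg (d+2) (2*k-1) y * (-((1 - y^2) ^ (((d:ℝ)-1)/2)) / ((d:ℝ)-1)) with hf'
  have int1 : IntervalIntegrable (fun x => x * geg d (2*k) x * (1 - x^2) ^ (((d:ℝ)-3)/2))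
      volume 0 1 := by
    have := weight_integrable (((d:ℝ)-3)/2) hq (fun x => x * geg d (2*k) x)
      (continuous_id.mul hg)
    simpa [mul_assoc] using this
  have int2 : IntervalIntegrable
      (fun x => ((2*(k:ℝ)) * (2*(k:ℝ) + (d:ℝ) - 2) / ((d:ℝ) - 1)) * geg (d+2) (2*k-1) x * (-((1 - x^2) ^ (((d:ℝ)-1)/2)) / ((d:ℝ)-1)))
      volume 0 1 := by
    apply Continuous.intervalIntegrable
    exact ((continuous_const.mul hG).mul ((hwp.neg).div_const ((d:ℝ)-1)))
  have hderiv : ∀ y ∈ Set.Ioo (0:ℝ) 1, HasDerivAt F (f' y) y := by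
    intro y hy
    have hbase : (0:ℝ) < 1 - y^2 := by nlinarith [hy.1, hy.2]
    have hgd := gegD d hd (2*k) y
    have hinner : HasDerivAt (fun z : ℝ => 1 - z^2) (-(2*y)) y := by
      have := (hasDerivAt_pow 2 y).const_sub 1
      norm_num at this
      convert this using 1
    have hw0 : HasDerivAt (fun z : ℝ => (1 - z^2) ^ (((d:ℝ)-1)/2))
        ((((d:ℝ)-1)/2) * (1 - y^2) ^ (((d:ℝ)-1)/2 - 1) * (-(2*y))) y :=
      ((Real.hasDerivAt_rpow_const (Or.inl hbase.ne')).comp y hinner :)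
    have hw : HasDerivAt (fun z : ℝ => -((1 - z^2) ^ (((d:ℝ)-1)/2)) / ((d:ℝ)-1))
        (-(((((d:ℝ)-1)/2) * (1 - y^2) ^ (((d:ℝ)-1)/2 - 1) * (-(2*y)))) / ((d:ℝ)-1)) y :=
      (hw0.neg).div_const ((d:ℝ)-1)
    have := hgd.mul hw
    refine this.congr_deriv ?_
    simp only [hf']
    rw [show ((d:ℝ)-1)/2 - 1 = ((d:ℝ)-3)/2 by ring]
    push_cast
    field_simp
    ring
  have hcont : ContinuousOn F (Set.Icc 0 1) :=
    (hg.mul ((hwp.neg).div_const ((d:ℝ)-1))).continuousOn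
  have hint : IntervalIntegrable f' volume 0 1 := int1.add int2
  have hftc := intervalIntegral.integral_eq_sub_of_hasDerivAt_of_le (by norm_num)
    hcont hderiv hint
  have hF1 : F 1 = 0 := by
    rw [hF]
    norm_num [Real.zero_rpow hpne]
  have hF0 : F 0 = -(geg d (2*k) 0) / ((d:ℝ)-1) := by
    rw [hF]
    norm_num [Real.one_rpow]
    ring
  rw [hF1, hF0] at hftc
  -- split the integral
  have hsplit : (∫ y in (0:ℝ)..1, f' y)
      = (∫ y in (0:ℝ)..1, y * geg d (2*k) y * (1 - y^2) ^ (((d:ℝ)-3)/2))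
        + ∫ y in (0:ℝ)..1,
            ((2*(k:ℝ)) * (2*(k:ℝ) + (d:ℝ) - 2) / ((d:ℝ) - 1)) * geg (d+2) (2*k-1) y * (-((1 - y^2) ^ (((d:ℝ)-1)/2)) / ((d:ℝ)-1)) := by
    rw [hf', ← intervalIntegral.integral_add int1 int2]
  set J : ℝ := ∫ y in (0:ℝ)..1, geg (d+2) (2*k-1) y * (1 - y^2) ^ (((d:ℝ)-1)/2) with hJ
  have hI2 : (∫ y in (0:ℝ)..1,
      ((2*(k:ℝ)) * (2*(k:ℝ) + (d:ℝ) - 2) / ((d:ℝ) - 1)) * geg (d+2) (2*k-1) y * (-((1 - y^2) ^ (((d:ℝ)-1)/2)) / ((d:ℝ)-1)))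
      = (-((2*(k:ℝ)) * (2*(k:ℝ) + (d:ℝ) - 2) / ((d:ℝ) - 1)) / ((d:ℝ)-1)) * J := by
    rw [hJ, ← intervalIntegral.integral_const_mul]
    apply intervalIntegral.integral_congr
    intro x _
    ring
  have hI1 : (∫ y in (0:ℝ)..1, y * geg d (2*k) y * (1 - y^2) ^ (((d:ℝ)-3)/2))
      = geg d (2*k) 0 / ((d:ℝ)-1) + (((2*(k:ℝ)) * (2*(k:ℝ) + (d:ℝ) - 2) / ((d:ℝ) - 1))/((d:ℝ)-1)) * J := by
    have h := hsplit
    rw [hI2, hftc] at h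
    linear_combination -h
  -- relate Ageg to I1
  have hA : Ageg d k = Zc d * (geg d (2*k) 0 / ((d:ℝ)-1) + (((2*(k:ℝ)) * (2*(k:ℝ) + (d:ℝ) - 2) / ((d:ℝ) - 1))/((d:ℝ)-1)) * J) := by
    rw [Ageg, ← hI1, ← intervalIntegral.integral_const_mul]
    apply intervalIntegral.integral_congr
    intro x _
    ring
  -- relate Bgeg to J
  have hZ : (0:ℝ) < Zc (d+2) := Zc_pos (d+2) (by omega)
  have hB : Bgeg (d+2) (k-1) = Zc (d+2) * J := by
    rw [Bgeg, show 2*(k-1)+1 = 2*k-1 by omega, hJ]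
    rw [← intervalIntegral.integral_const_mul]
    apply intervalIntegral.integral_congr
    intro x _
    push_cast
    rw [show ((d:ℝ)+2-3)/2 = ((d:ℝ)-1)/2 by ring]
    ring
  rw [hA, hB]
  have hZne : Zc (d+2) ≠ 0 := hZ.ne'
  field_simp
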